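/- The function R_4(t) = \frac{1}{2}\sqrt{\frac{(1-4t)e^{-4t} - (2-4t+12t^2-8t^3)e^{-2t} + 1}{t^2((1-2t)e^{-2t}-1)^2}} satisfies R_4(t) = \frac{1}{2t} + O(t^{1/2} e^{-t}) as t \to \infty. -/

import Mathlib

open Filter Asymptotics

noncomputable def R4 (t : ℝ) : ℝ :=
  (1 / 2) * Real.sqrt
    (((1 - 4 * t) * Real.exp (-4 * t)
        - (2 - 4 * t + 12 * t ^ 2 - 8 * t ^ 3) * Real.exp (-2 * t) + 1) /
      (t ^ 2 * ((1 - 2 * t) * Real.exp (-2 * t) - 1) ^ 2))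

lemma sqrt_diff_le_aux {a b : ℝ} (ha : 0 ≤ a) (hb : 0 < b) :
    |Real.sqrt a - Real.sqrt b| ≤ |a - b| / Real.sqrt b := by
  have hsb : 0 < Real.sqrt b := Real.sqrt_pos.2 hb
  have hsa : 0 ≤ Real.sqrt a := Real.sqrt_nonneg a
  have hsum : 0 < Real.sqrt a + Real.sqrt b := by positivity
  have h1 : Real.sqrt a * Real.sqrt a = a := Real.mul_self_sqrt ha
  have h2 : Real.sqrt b * Real.sqrt b = b := Real.mul_self_sqrt hb.le
  have key : |Real.sqrt a - Real.sqrt b| * (Real.sqrt a + Real.sqrt b) = |a - b| := by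
    rw [← abs_of_pos hsum, ← abs_mul]
    congr 1
    nlinarith [h1, h2]
  rw [le_div_iff₀ hsb]
  calc |Real.sqrt a - Real.sqrt b| * Real.sqrt b
      ≤ |Real.sqrt a - Real.sqrt b| * (Real.sqrt a + Real.sqrt b) := by
        apply mul_le_mul_of_nonneg_left (by linarith) (abs_nonneg _)
    _ = |a - b| := key

lemma main_bound (t u : ℝ) (ht : 768 ≤ t) (hu : 0 < u) (hu1 : u ≤ 1)
    (hu3 : t ^ 3 * u ≤ 1 / 48) :
    |(1 / 2) * Real.sqrt
        (((1 - 4 * t) * u ^ 2 - (2 - 4 * t + 12 * t ^ 2 - 8 * t ^ 3) * u + 1) /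
          (t ^ 2 * ((1 - 2 * t) * u - 1) ^ 2)) - 1 / (2 * t)|
      ≤ 12 * t ^ 2 * u := by
  have ht0 : (0 : ℝ) < t := by linarith
  have ht1 : (1 : ℝ) ≤ t := by linarith
  have hE1 : (1 - 2 * t) * u - 1 ≤ -1 := by nlinarith
  have hE2 : 1 ≤ ((1 - 2 * t) * u - 1) ^ 2 := by nlinarith
  have hDt : t ^ 2 ≤ t ^ 2 * ((1 - 2 * t) * u - 1) ^ 2 := by nlinarith [sq_nonneg t]
  have hD0 : (0 : ℝ) < t ^ 2 * ((1 - 2 * t) * u - 1) ^ 2 := by positivity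
  set N : ℝ := (1 - 4 * t) * u ^ 2 - (2 - 4 * t + 12 * t ^ 2 - 8 * t ^ 3) * u + 1 with hN_def
  set D : ℝ := t ^ 2 * ((1 - 2 * t) * u - 1) ^ 2 with hD_def
  set M : ℝ := -4 * t ^ 2 * u ^ 2 + (8 * t ^ 3 - 12 * t ^ 2) * u with hM_def
  have hMabs : |M| ≤ 24 * t ^ 3 * u := by
    have k1 : 0 ≤ t ^ 2 * u * (1 - u) :=
      mul_nonneg (mul_nonneg (sq_nonneg t) hu.le) (by linarith)
    have k6 : 0 ≤ t ^ 2 * (t - 1) * u :=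
      mul_nonneg (mul_nonneg (sq_nonneg t) (by linarith)) hu.le
    have k3 : 0 ≤ t ^ 2 * u ^ 2 := by positivity
    have k4 : 0 ≤ t ^ 3 * u := by positivity
    have k5 : 0 ≤ t ^ 2 * u := by positivity
    rw [abs_le, hM_def]
    constructor
    · nlinarith [k1, k6, k4]
    · nlinarith [k3, k4, k5]
  have hMsmall : |M| ≤ 1 / 2 := by
    calc |M| ≤ 24 * t ^ 3 * u := hMabs
      _ = 24 * (t ^ 3 * u) := by ring
      _ ≤ 24 * (1 / 48) := by linarith [hu3]
      _ = 1 / 2 := by norm_num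
  have hNE : N = ((1 - 2 * t) * u - 1) ^ 2 + M := by rw [hN_def, hM_def]; ring
  have hN0 : 0 ≤ N := by
    have := abs_le.1 hMsmall
    rw [hNE]; nlinarith
  have ha0 : 0 ≤ N / D := div_nonneg hN0 hD0.le
  have hb0 : (0 : ℝ) < 1 / t ^ 2 := by positivity
  have hsqb : Real.sqrt (1 / t ^ 2) = 1 / t := by
    rw [show (1 : ℝ) / t ^ 2 = (1 / t) ^ 2 by ring, Real.sqrt_sq (by positivity)]
  have hquot : N / D - 1 / t ^ 2 = M / D := by
    rw [hD_def, hNE]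
    have hE0 : ((1 - 2 * t) * u - 1) ^ 2 ≠ 0 := by positivity
    rw [div_sub_div _ _ (mul_ne_zero (pow_ne_zero 2 ht0.ne') hE0) (pow_ne_zero 2 ht0.ne'),
      div_eq_div_iff (mul_ne_zero (mul_ne_zero (pow_ne_zero 2 ht0.ne') hE0)
        (pow_ne_zero 2 ht0.ne')) (mul_ne_zero (pow_ne_zero 2 ht0.ne') hE0)]
    ring
  have hstep : |(1 / 2) * Real.sqrt (N / D) - 1 / (2 * t)|
      ≤ t / 2 * |N / D - 1 / t ^ 2| := by
    have h := sqrt_diff_le_aux ha0 hb0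
    rw [hsqb] at h
    have hR2 : (1 / 2) * Real.sqrt (N / D) - 1 / (2 * t)
        = 1 / 2 * (Real.sqrt (N / D) - 1 / t) := by
      ring
    rw [hR2, abs_mul, abs_of_pos (by norm_num : (0:ℝ) < 1/2)]
    calc 1 / 2 * |Real.sqrt (N / D) - 1 / t|
        ≤ 1 / 2 * (|N / D - 1 / t ^ 2| / (1 / t)) := by linarith
      _ = t / 2 * |N / D - 1 / t ^ 2| := by
          rw [div_div_eq_mul_div, div_one]; ring
  have hMD : |N / D - 1 / t ^ 2| ≤ 24 * t * u := by
    rw [hquot, abs_div, abs_of_pos hD0]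
    calc |M| / D ≤ (24 * t ^ 3 * u) / t ^ 2 :=
          div_le_div₀ (by positivity) hMabs (by positivity) hDt
      _ = 24 * t * u := by field_simp
  calc |(1 / 2) * Real.sqrt (N / D) - 1 / (2 * t)|
      ≤ t / 2 * |N / D - 1 / t ^ 2| := hstep
    _ ≤ t / 2 * (24 * t * u) := by
        apply mul_le_mul_of_nonneg_left hMD (by positivity)
    _ = 12 * t ^ 2 * u := by ring

theorem stmt13 :
    (fun t : ℝ => R4 t - 1 / (2 * t))
      =O[atTop] fun t : ℝ => t ^ ((1 : ℝ) / 2) * Real.exp (-t) := by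
  rw [isBigO_iff]
  refine ⟨48, ?_⟩
  filter_upwards [eventually_ge_atTop (768 : ℝ)] with t ht
  have ht0 : (0 : ℝ) < t := by linarith
  have ht1 : (1 : ℝ) ≤ t := by linarith
  have hu : 0 < Real.exp (-2 * t) := Real.exp_pos _
  have hu1 : Real.exp (-2 * t) ≤ 1 := Real.exp_le_one_iff.2 (by linarith)
  have h4 : Real.exp (-4 * t) = Real.exp (-2 * t) ^ 2 := by
    rw [sq, ← Real.exp_add]; ring_nf
  have hexp2 : t ^ 4 / 16 ≤ Real.exp (2 * t) := by
    have h := Real.add_one_le_exp (t / 2)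
    have h2 : Real.exp (2 * t)
        = Real.exp (t / 2) * Real.exp (t / 2) * Real.exp (t / 2) * Real.exp (t / 2) := by
      rw [← Real.exp_add, ← Real.exp_add, ← Real.exp_add]; ring_nf
    have h3 : (t / 2) ^ 4 ≤ (Real.exp (t / 2)) ^ 4 :=
      pow_le_pow_left₀ (by linarith) (by linarith) 4
    calc t ^ 4 / 16 = (t / 2) ^ 4 := by ring
      _ ≤ (Real.exp (t / 2)) ^ 4 := h3
      _ = Real.exp (2 * t) := by rw [h2]; ring
  have hexp1 : t ^ 2 / 4 ≤ Real.exp t := by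
    have h := Real.add_one_le_exp (t / 2)
    have h2 : Real.exp t = Real.exp (t / 2) * Real.exp (t / 2) := by
      rw [← Real.exp_add]; ring_nf
    nlinarith [Real.exp_pos (t / 2)]
  have hu3 : t ^ 3 * Real.exp (-2 * t) ≤ 1 / 48 := by
    have hue : Real.exp (-2 * t) * Real.exp (2 * t) = 1 := by
      rw [← Real.exp_add]; norm_num
    have h48 : 48 * t ^ 3 ≤ Real.exp (2 * t) := by
      nlinarith [hexp2, mul_nonneg (pow_nonneg ht0.le 3) (by linarith : (0:ℝ) ≤ t - 768)]
    nlinarith [mul_le_mul_of_nonneg_right h48 hu.le, hue]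
  have hte : t ^ 2 * Real.exp (-t) ≤ 4 := by
    have huet : Real.exp (-t) * Real.exp t = 1 := by
      rw [← Real.exp_add]; norm_num
    have hep : 0 < Real.exp (-t) := Real.exp_pos _
    nlinarith [mul_le_mul_of_nonneg_right hexp1 hep.le, huet]
  have hbound := main_bound t (Real.exp (-2 * t)) ht hu hu1 hu3
  have hR : R4 t - 1 / (2 * t)
      = (1 / 2) * Real.sqrt
        (((1 - 4 * t) * Real.exp (-2 * t) ^ 2
            - (2 - 4 * t + 12 * t ^ 2 - 8 * t ^ 3) * Real.exp (-2 * t) + 1) /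
          (t ^ 2 * ((1 - 2 * t) * Real.exp (-2 * t) - 1) ^ 2)) - 1 / (2 * t) := by
    rw [R4, h4]
  have hue2 : Real.exp (-2 * t) = Real.exp (-t) * Real.exp (-t) := by
    rw [← Real.exp_add]; ring_nf
  have hrhs : ‖t ^ ((1 : ℝ) / 2) * Real.exp (-t)‖ = Real.sqrt t * Real.exp (-t) := by
    rw [Real.norm_eq_abs, ← Real.sqrt_eq_rpow, abs_of_nonneg (by positivity)]
  rw [Real.norm_eq_abs, hrhs, hR]
  have hst : 1 ≤ Real.sqrt t := by
    rw [show (1:ℝ) = Real.sqrt 1 by simp]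
    exact Real.sqrt_le_sqrt ht1
  have hep : 0 < Real.exp (-t) := Real.exp_pos _
  calc |(1 / 2) * Real.sqrt
        (((1 - 4 * t) * Real.exp (-2 * t) ^ 2
            - (2 - 4 * t + 12 * t ^ 2 - 8 * t ^ 3) * Real.exp (-2 * t) + 1) /
          (t ^ 2 * ((1 - 2 * t) * Real.exp (-2 * t) - 1) ^ 2)) - 1 / (2 * t)|
      ≤ 12 * t ^ 2 * Real.exp (-2 * t) := hbound
    _ = 12 * (t ^ 2 * Real.exp (-t)) * Real.exp (-t) := by rw [hue2]; ring
    _ ≤ 12 * 4 * Real.exp (-t) := by nlinarith [mul_nonneg (sq_nonneg t) hep.le]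
    _ ≤ 48 * (Real.sqrt t * Real.exp (-t)) := by nlinarith
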